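/- Let A be a finite poset with minimal-element graph G_A (vertices the minimal elements D_A, edges {β,β'} when β,β' ≤ α for some α) and maximal-element graph G_{A*} (vertices the maximal elements D_{A*}, edges {β,β'} when β,β' ≥ α for some α). Let T and T* be locally connected spanning trees of G_A and G_{A*} respectively. Then the subgraph of the Cartesian product graph T □ T* induced on the vertex set {(α, β) ∈ D_A × D_{A*} : α ≤ β in A} is connected. -/

import Mathlib

/-- The minimal elements of a poset `A`. -/
abbrev Dmin (A : Type*) [PartialOrder A] : Type _ := {a : A // IsMin a}

/-- The maximal elements of a poset `A`. -/
abbrev Dmax (A : Type*) [PartialOrder A] : Type _ := {a : A // IsMax a}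

/-- The graph of interlaced relation on the minimal elements of `A`. -/
def interlaced (A : Type*) [PartialOrder A] : SimpleGraph (Dmin A) where
  Adj β β' := β ≠ β' ∧ ∃ α : A, β.1 ≤ α ∧ β'.1 ≤ α
  symm := by
    constructor
    rintro β β' ⟨hne, α, h1, h2⟩
    exact ⟨hne.symm, α, h2, h1⟩
  loopless := by constructor; rintro β ⟨hne, -⟩; exact hne rfl

/-- The dual graph of interlaced relation on the maximal elements of `A`. -/
def interlacedMax (A : Type*) [PartialOrder A] : SimpleGraph (Dmax A) where
  Adj β β' := β ≠ β' ∧ ∃ α : A, α ≤ β.1 ∧ α ≤ β'.1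
  symm := by
    constructor
    rintro β β' ⟨hne, α, h1, h2⟩
    exact ⟨hne.symm, α, h2, h1⟩
  loopless := by constructor; rintro β ⟨hne, -⟩; exact hne rfl

/-- Local connectedness of a spanning tree of the graph of interlaced relation. -/
def LocallyConnected {A : Type*} [PartialOrder A] (T : SimpleGraph (Dmin A)) : Prop :=
  ∀ α : A, (T.induce {β : Dmin A | β.1 ≤ α}).Connected

/-- Dual local connectedness for spanning trees on the maximal elements. -/
def LocallyConnectedMax {A : Type*} [PartialOrder A] (T : SimpleGraph (Dmax A)) : Prop :=
  ∀ α : A, (T.induce {β : Dmax A | α ≤ β.1}).Connected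

/-- The comparability graph of a poset (connectivity of which is equivalent to
connectivity of the Hasse diagram). -/
def comparabilityGraph (A : Type*) [PartialOrder A] : SimpleGraph A where
  Adj x y := x ≠ y ∧ (x ≤ y ∨ y ≤ x)
  symm := by constructor; rintro x y ⟨hne, h⟩; exact ⟨hne.symm, h.symm⟩
  loopless := by constructor; rintro x ⟨hne, -⟩; exact hne rfl

/-- The Cartesian product `T □ T*` restricted to the pairs `(α, β)` with `α ≤ β`. -/
def prodGraph {A : Type*} [PartialOrder A]
    (T : SimpleGraph (Dmin A)) (T' : SimpleGraph (Dmax A)) :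
    SimpleGraph {p : Dmin A × Dmax A // p.1.1 ≤ p.2.1} where
  Adj p q := (p.1.1 = q.1.1 ∧ T'.Adj p.1.2 q.1.2) ∨ (T.Adj p.1.1 q.1.1 ∧ p.1.2 = q.1.2)
  symm := by
    constructor
    rintro p q (⟨h1, h2⟩ | ⟨h1, h2⟩)
    · exact Or.inl ⟨h1.symm, h2.symm⟩
    · exact Or.inr ⟨h1.symm, h2.symm⟩
  loopless := by
    constructor
    rintro p (⟨-, h⟩ | ⟨h, -⟩) <;> exact h.ne rfl

/-- Auxiliary: vertices sharing the same first coordinate are reachable in the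
restricted product, using dual local connectedness of `T'`. -/
lemma prod_reach_fix {A : Type*} [PartialOrder A]
    (T : SimpleGraph (Dmin A)) (T' : SimpleGraph (Dmax A))
    (hT'lc : LocallyConnectedMax T')
    (β : Dmin A) (γ γ' : Dmax A) (h : β.1 ≤ γ.1) (h' : β.1 ≤ γ'.1) :
    (prodGraph T T').Reachable ⟨(β, γ), h⟩ ⟨(β, γ'), h'⟩ := by
  have hc := hT'lc β.1
  have hr := hc.preconnected ⟨γ, h⟩ ⟨γ', h'⟩
  exact hr.map (⟨fun δ => ⟨(β, δ.1), δ.2⟩, fun {a b} hab => Or.inl ⟨rfl, hab⟩⟩ :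
    (T'.induce {δ : Dmax A | β.1 ≤ δ.1}) →g (prodGraph T T'))

/-- If `T` and `T*` are locally connected spanning trees of the graphs of interlaced
relation on the minimal and the maximal elements respectively, then the restricted
Cartesian product `T □ T*` is connected. -/
theorem stmt_7 {A : Type*} [Fintype A] [Nonempty A] [PartialOrder A]
    (hconn : (comparabilityGraph A).Connected)
    (T : SimpleGraph (Dmin A)) (hT : T ≤ interlaced A ∧ T.IsTree)
    (hTlc : LocallyConnected T)
    (T' : SimpleGraph (Dmax A)) (hT' : T' ≤ interlacedMax A ∧ T'.IsTree)
    (hT'lc : LocallyConnectedMax T') :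
    (prodGraph T T').Connected := by
  have exmax : ∀ a : A, ∃ b, a ≤ b ∧ IsMax b := by
    intro a
    obtain ⟨b, hab, hb⟩ := Finite.exists_le_maximal (p := fun _ : A => True) trivial
    exact ⟨b, hab, fun c hc => hb.2 trivial hc⟩
  have key : ∀ {b c : Dmin A} (_ : T.Walk b c) (γ : Dmax A) (h : b.1 ≤ γ.1)
      (q : {p : Dmin A × Dmax A // p.1.1 ≤ p.2.1}) (_ : q.1.1 = c),
      (prodGraph T T').Reachable ⟨(b, γ), h⟩ q := by
    intro b c w
    induction w with
    | nil =>
      intro γ h q hq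
      obtain ⟨⟨b', γ'⟩, hle⟩ := q
      simp only at hq
      subst hq
      exact prod_reach_fix T T' hT'lc _ γ γ' h hle
    | @cons b b₁ c hadj w ih =>
      intro γ h q hq
      obtain ⟨hne, α, h1, h2⟩ := hT.1 hadj
      obtain ⟨δ, hαδ, hδ⟩ := exmax α
      have hbδ : b.1 ≤ δ := h1.trans hαδ
      have hb1δ : b₁.1 ≤ δ := h2.trans hαδ
      have r1 := prod_reach_fix T T' hT'lc b γ ⟨δ, hδ⟩ h hbδ
      have r2 : (prodGraph T T').Adj ⟨(b, ⟨δ, hδ⟩), hbδ⟩ ⟨(b₁, ⟨δ, hδ⟩), hb1δ⟩ :=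
        Or.inr ⟨hadj, rfl⟩
      exact r1.trans (r2.reachable.trans (ih ⟨δ, hδ⟩ hb1δ q hq))
  rw [SimpleGraph.connected_iff]
  refine ⟨?_, ?_⟩
  · intro p q
    obtain ⟨⟨β, γ⟩, h⟩ := p
    exact key (hT.2.isConnected.preconnected β q.1.1).some γ h q rfl
  · obtain ⟨a⟩ := ‹Nonempty A›
    obtain ⟨b, hba, hb⟩ := Finite.exists_le_minimal (p := fun _ : A => True) trivial
    obtain ⟨d, had, hd⟩ := exmax a
    exact ⟨⟨(⟨b, fun c hc => hb.2 trivial hc⟩, ⟨d, hd⟩), hba.trans had⟩⟩
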